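/- Let λ ≥ 0, γ ≥ 0 with λ·γ ≤ 1. Let S : ℝ^N → ℝ^{g·w} be a linear map satisfying S* S = I (the analysis operator of a Parseval frame, with S* the adjoint). Partition the coordinates of ℝ^{g·w} into g non-overlapping groups of size w, and define 𝐏_γ(t) = ∑_{j=1}^{g} P_γ(t^{(j)}), where t^{(j)} ∈ ℝ^w is the j-th group of coordinates of t. Then for any y ∈ ℝ^N, the function x ↦ (1/2)·‖y − x‖₂² + λ·𝐏_γ(S x) is convex on ℝ^N. -/

import Mathlib

open Finset

/-- The penalty `P_gamma(x) = gamma * (sum_{i<m} |x_i| |x_m|) + sum_i |x_i|` on R^n. -/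
noncomputable def P (n : ℕ) (γ : ℝ) (x : Fin n → ℝ) : ℝ :=
  γ * (∑ i : Fin n, ∑ m ∈ Finset.Ioi i, |x i| * |x m|) + ∑ i : Fin n, |x i|

private lemma sq_sum_aux {n : ℕ} (a : Fin n → ℝ) :
    (∑ i, a i) ^ 2 = ∑ i, a i ^ 2 + 2 * ∑ i, ∑ m ∈ Finset.Ioi i, a i * a m := by
  have hswap : ∑ i, ∑ m ∈ Finset.Iio i, a i * a m
      = ∑ i, ∑ m ∈ Finset.Ioi i, a i * a m := by
    rw [Finset.sum_comm' (s' := fun y => Finset.Ioi y) (t' := Finset.univ)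
      (by intro x y; simp)]
    simp_rw [mul_comm]
  have h1 : ∀ i : Fin n, ∑ m, a i * a m
      = a i * a i + (∑ m ∈ Finset.Ioi i, a i * a m + ∑ m ∈ Finset.Iio i, a i * a m) := by
    intro i
    have hc := Finset.sum_compl_add_sum ({i} : Finset (Fin n)) (fun m => a i * a m)
    simp only [Finset.sum_singleton] at hc
    have hd : ∑ m ∈ Finset.Ioi i, a i * a m + ∑ m ∈ Finset.Iio i, a i * a m
        = ∑ m ∈ ({i} : Finset (Fin n))ᶜ, a i * a m := by
      rw [← Finset.sum_disjUnion (Finset.disjoint_Ioi_Iio i), Finset.Ioi_disjUnion_Iio]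
    linarith
  rw [sq, Finset.sum_mul_sum]
  simp_rw [h1, ← sq]
  rw [Finset.sum_add_distrib, Finset.sum_add_distrib, hswap]
  ring

private lemma P_eq (n : ℕ) (γ : ℝ) (u : Fin n → ℝ) :
    P n γ u = γ / 2 * ((∑ i, |u i|) ^ 2 - ∑ i, (u i) ^ 2) + ∑ i, |u i| := by
  have h := sq_sum_aux (fun i => |u i|)
  simp only [sq_abs] at h
  have hT : (∑ i : Fin n, ∑ m ∈ Finset.Ioi i, |u i| * |u m|)
      = ((∑ i, |u i|) ^ 2 - ∑ i, (u i) ^ 2) / 2 := by linarith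
  rw [P, hT]; ring

private lemma convexOn_finset_sum {ι E : Type*} [AddCommMonoid E] [Module ℝ E]
    {s : Set E} (hs : Convex ℝ s) (t : Finset ι) (f : ι → E → ℝ)
    (h : ∀ i ∈ t, ConvexOn ℝ s (f i)) :
    ConvexOn ℝ s (fun x => ∑ i ∈ t, f i x) := by
  classical
  induction t using Finset.cons_induction with
  | empty => simpa using convexOn_const 0 hs
  | cons a t ha ih =>
    simp_rw [Finset.sum_cons]
    exact (h _ (Finset.mem_cons_self _ _)).add
      (ih fun i hi => h i (Finset.mem_cons_of_mem hi))

private lemma convexOn_sq_of_nonneg {E : Type*} [AddCommMonoid E] [Module ℝ E]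
    {s : Set E} {f : E → ℝ} (hf : ConvexOn ℝ s f) (h0 : ∀ x ∈ s, 0 ≤ f x) :
    ConvexOn ℝ s (fun x => f x ^ 2) := by
  refine ⟨hf.1, fun x hx y hy a b ha hb hab => ?_⟩
  have h := hf.2 hx hy ha hb hab
  have hx0 := h0 x hx
  have hy0 := h0 y hy
  have hm : 0 ≤ f (a • x + b • y) := h0 _ (hf.1 hx hy ha hb hab)
  have h1 : f (a • x + b • y) ^ 2 ≤ (a * f x + b * f y) ^ 2 := by
    apply pow_le_pow_left₀ hm
    simpa [smul_eq_mul] using h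
  have h2 : (a * f x + b * f y) ^ 2 ≤ a * f x ^ 2 + b * f y ^ 2 := by
    nlinarith [sq_nonneg (f x - f y), mul_nonneg ha hb, mul_nonneg (mul_nonneg ha hb) (sq_nonneg (f x - f y))]
  simpa [smul_eq_mul] using h1.trans h2

/-- Prop. 8: for a Parseval frame analysis operator `S` (i.e. `S* S = I`) and
`lam * gamma ≤ 1`, the analysis-prior denoising cost is convex. -/
theorem analysis_convex (N g w : ℕ) (lam γ : ℝ) (hlam : 0 ≤ lam) (hγ : 0 ≤ γ)
    (hlγ : lam * γ ≤ 1)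
    (S : (Fin N → ℝ) →ₗ[ℝ] (Fin g → Fin w → ℝ))
    (hS : ∀ x y : Fin N → ℝ, ∑ j : Fin g, ∑ i : Fin w, S x j i * S y j i = ∑ i : Fin N, x i * y i)
    (y : Fin N → ℝ) :
    ConvexOn ℝ Set.univ (fun x : Fin N → ℝ =>
      (1 / 2) * ∑ i : Fin N, (y i - x i) ^ 2 + lam * ∑ j : Fin g, P w γ (S x j)) := by
  set G : (Fin N → ℝ) → ℝ := fun x =>
    ((1 / 2) * ∑ i, y i ^ 2 + (-∑ i, y i * x i))
    + ((1 - lam * γ) / 2) * ∑ i, x i ^ 2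
    + ((lam * γ / 2) * ∑ j, (∑ i, |S x j i|) ^ 2
    + lam * ∑ j, ∑ i, |S x j i|) with hG
  have hfeq : (fun x : Fin N → ℝ =>
      (1 / 2) * ∑ i : Fin N, (y i - x i) ^ 2 + lam * ∑ j : Fin g, P w γ (S x j)) = G := by
    funext x
    have hx2 : ∑ j, ∑ i, (S x j i) ^ 2 = ∑ i, (x i) ^ 2 := by
      simpa [sq] using hS x x
    have e1 : ∑ i, (y i - x i) ^ 2
        = ∑ i, y i ^ 2 - 2 * ∑ i, y i * x i + ∑ i, x i ^ 2 := by
      have h : ∀ i, (y i - x i) ^ 2 = y i ^ 2 - 2 * (y i * x i) + x i ^ 2 :=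
        fun i => by ring
      simp_rw [h, Finset.sum_add_distrib, Finset.sum_sub_distrib, ← Finset.mul_sum]
    have e2 : ∑ j, P w γ (S x j)
        = γ / 2 * ∑ j, (∑ i, |S x j i|) ^ 2 - γ / 2 * ∑ i, (x i) ^ 2
          + ∑ j, ∑ i, |S x j i| := by
      simp_rw [P_eq, mul_sub]
      rw [Finset.sum_add_distrib, Finset.sum_sub_distrib, ← Finset.mul_sum,
        ← Finset.mul_sum, hx2]
    rw [hG, e1, e2]; ring
  rw [hfeq]
  have habs : ConvexOn ℝ Set.univ (fun t : ℝ => |t|) := by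
    exact convexOn_univ_norm (E := ℝ)
  have hsq : ConvexOn ℝ Set.univ (fun t : ℝ => t ^ 2) := Even.convexOn_pow even_two
  -- the affine part
  have h2 : ConvexOn ℝ Set.univ (fun x : Fin N → ℝ =>
      (1 / 2) * ∑ i, y i ^ 2 + (-∑ i, y i * x i)) := by
    refine (convexOn_const _ convex_univ).add ?_
    exact LinearMap.convexOn
      (⟨⟨fun x : Fin N → ℝ => -∑ i, y i * x i, by
          intro a b
          simp only [Pi.add_apply, mul_add, Finset.sum_add_distrib]
          ring⟩, by
        intro c a
        have hcs : ∑ i, y i * (c * a i) = c * ∑ i, y i * a i := by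
          rw [Finset.mul_sum]
          exact Finset.sum_congr rfl fun i _ => by ring
        simp only [Pi.smul_apply, smul_eq_mul, hcs, RingHom.id_apply]
        ring⟩ :
        (Fin N → ℝ) →ₗ[ℝ] ℝ) convex_univ
  -- the quadratic part
  have h3 : ConvexOn ℝ Set.univ (fun x : Fin N → ℝ => ∑ i, x i ^ 2) := by
    refine convexOn_finset_sum convex_univ Finset.univ _ fun i _ => ?_
    simpa [Function.comp_def] using hsq.comp_linearMap (LinearMap.proj (R := ℝ) (φ := fun _ : Fin N => ℝ) i)
  have h3' : ConvexOn ℝ Set.univ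
      (fun x : Fin N → ℝ => ((1 - lam * γ) / 2) * ∑ i, x i ^ 2) := by
    have hc : (0:ℝ) ≤ (1 - lam * γ) / 2 := by linarith
    simpa [smul_eq_mul] using h3.smul hc
  -- absolute values of the analysis coefficients
  have habsS : ∀ (j : Fin g) (i : Fin w),
      ConvexOn ℝ Set.univ (fun x : Fin N → ℝ => |S x j i|) := by
    intro j i
    simpa [Function.comp_def] using habs.comp_linearMap
      ((LinearMap.proj i).comp ((LinearMap.proj j).comp S))
  have h4 : ∀ j : Fin g, ConvexOn ℝ Set.univ
      (fun x : Fin N → ℝ => (∑ i, |S x j i|) ^ 2) := by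
    intro j
    have hn : ConvexOn ℝ Set.univ (fun x : Fin N → ℝ => ∑ i, |S x j i|) :=
      convexOn_finset_sum convex_univ Finset.univ _ fun i _ => habsS j i
    exact convexOn_sq_of_nonneg hn fun x _ =>
      Finset.sum_nonneg fun i _ => abs_nonneg _
  have h4' : ConvexOn ℝ Set.univ (fun x : Fin N → ℝ =>
      (lam * γ / 2) * ∑ j, (∑ i, |S x j i|) ^ 2) := by
    have hc : (0:ℝ) ≤ lam * γ / 2 := by positivity
    have := (convexOn_finset_sum convex_univ Finset.univ _ fun j _ => h4 j).smul hc
    simpa [smul_eq_mul] using this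
  have h5 : ConvexOn ℝ Set.univ (fun x : Fin N → ℝ =>
      lam * ∑ j, ∑ i, |S x j i|) := by
    have := (convexOn_finset_sum convex_univ Finset.univ
      (fun j (x : Fin N → ℝ) => ∑ i, |S x j i|)
      (fun j _ => convexOn_finset_sum convex_univ Finset.univ _
        fun i _ => habsS j i)).smul hlam
    simpa [smul_eq_mul] using this
  exact ((h2.add h3').add (h4'.add h5))
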